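/- Let ρ = p|ψ_n⟩⟨ψ_n| + (1−p)|GHZ_n⟩⟨GHZ_n| with 0 < p < 1, where |ψ_n⟩ = (|10...0⟩+|01...0⟩)/√2 and |GHZ_n⟩ = (|0...0⟩+|1...1⟩)/√2. Then the biseparable state σ = p|ψ_n⟩⟨ψ_n| + ((1−p)/2)|0...0⟩⟨0...0| + ((1−p)/2)|1...1⟩⟨1...1| has the same marginals as ρ on every subset S ⊂ [n] with |S| = n−1; hence the compatibility set C(ρ, S_{n−1}) contains a biseparable state. -/

import Mathlib

open scoped Matrix ComplexOrder

noncomputable section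

namespace QDL

variable {ι : Type*} [Fintype ι] [DecidableEq ι]

abbrev Config (d : ι → ℕ) := ∀ i, Fin (d i)

def IsState {d : ι → ℕ} (ρ : Matrix (Config d) (Config d) ℂ) : Prop :=
  ρ.PosSemidef ∧ ρ.trace = 1

def merge {d : ι → ℕ} (S : Finset ι)
    (f : Config (fun i : {i // i ∈ S} => d i))
    (g : Config (fun i : {i // i ∉ S} => d i)) : Config d := fun i =>
  if h : i ∈ S then f ⟨i, h⟩ else g ⟨i, h⟩

/-- Partial trace of `ρ` onto the subsystems in `S`. -/
def marginal {d : ι → ℕ} (S : Finset ι)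
    (ρ : Matrix (Config d) (Config d) ℂ) :
    Matrix (Config (fun i : {i // i ∈ S} => d i))
      (Config (fun i : {i // i ∈ S} => d i)) ℂ :=
  fun f g => ∑ h : Config (fun i : {i // i ∉ S} => d i), ρ (merge S f h) (merge S g h)

def Compatible {d : ι → ℕ} (𝒮 : Finset (Finset ι))
    (ρ σ : Matrix (Config d) (Config d) ℂ) : Prop :=
  ∀ S ∈ 𝒮, marginal S σ = marginal S ρ

def prodMat {d : ι → ℕ} (A : ∀ i, Matrix (Fin (d i)) (Fin (d i)) ℂ) :
    Matrix (Config d) (Config d) ℂ := fun f g => ∏ i, A i (f i) (g i)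

def FullySep {d : ι → ℕ} (ρ : Matrix (Config d) (Config d) ℂ) : Prop :=
  ∃ (k : ℕ) (w : Fin k → ℝ) (A : Fin k → ∀ i, Matrix (Fin (d i)) (Fin (d i)) ℂ),
    (∀ j, 0 ≤ w j) ∧ (∀ j i, (A j i).PosSemidef) ∧
    ρ = ∑ j, (w j : ℂ) • prodMat (A j)

def prodAcross {d : ι → ℕ} (S : Finset ι)
    (A : Matrix (Config (fun i : {i // i ∈ S} => d i))
      (Config (fun i : {i // i ∈ S} => d i)) ℂ)
    (B : Matrix (Config (fun i : {i // i ∉ S} => d i))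
      (Config (fun i : {i // i ∉ S} => d i)) ℂ) :
    Matrix (Config d) (Config d) ℂ :=
  fun f g => A (fun i => f i) (fun i => g i) * B (fun i => f i) (fun i => g i)

/-- `ρ` is a mixture of biproduct states with respect to the bipartition `S | Sᶜ`. -/
def SepAcross {d : ι → ℕ} (S : Finset ι)
    (ρ : Matrix (Config d) (Config d) ℂ) : Prop :=
  ∃ (k : ℕ) (w : Fin k → ℝ)
    (A : Fin k → Matrix (Config (fun i : {i // i ∈ S} => d i))
      (Config (fun i : {i // i ∈ S} => d i)) ℂ)
    (B : Fin k → Matrix (Config (fun i : {i // i ∉ S} => d i))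
      (Config (fun i : {i // i ∉ S} => d i)) ℂ),
    (∀ j, 0 ≤ w j) ∧ (∀ j, (A j).PosSemidef ∧ (B j).PosSemidef) ∧
    ρ = ∑ j, (w j : ℂ) • prodAcross S (A j) (B j)

/-- Biseparable: mixture of states, each separable across some nontrivial bipartition. -/
def Bisep {d : ι → ℕ} (ρ : Matrix (Config d) (Config d) ℂ) : Prop :=
  ∃ (k : ℕ) (w : Fin k → ℝ) (S : Fin k → Finset ι)
    (σ : Fin k → Matrix (Config d) (Config d) ℂ),
    (∀ j, 0 ≤ w j) ∧ (∀ j, S j ≠ ∅ ∧ S j ≠ Finset.univ) ∧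
    (∀ j, SepAcross (S j) (σ j)) ∧ ρ = ∑ j, (w j : ℂ) • σ j


/-- `|ψ_n⟩ = (|10⋯0⟩ + |01⋯0⟩)/√2` as an `n`-qubit vector. -/
def psiVec (n : ℕ) : Config (fun _ : Fin n => 2) → ℂ := fun f =>
  if f = (fun (i : Fin n) => if (i : ℕ) = 0 then (1 : Fin 2) else 0) ∨
     f = (fun (i : Fin n) => if (i : ℕ) = 1 then (1 : Fin 2) else 0) then ((Real.sqrt 2)⁻¹ : ℝ) else 0

/-- `|GHZ_n⟩ = (|0⋯0⟩ + |1⋯1⟩)/√2`. -/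
def ghzVec (n : ℕ) : Config (fun _ : Fin n => 2) → ℂ := fun f =>
  if f = (fun _ => 0) ∨ f = (fun _ => 1) then ((Real.sqrt 2)⁻¹ : ℝ) else 0

def allZero (n : ℕ) : Config (fun _ : Fin n => 2) → ℂ := fun f =>
  if f = (fun _ => 0) then 1 else 0

def allOne (n : ℕ) : Config (fun _ : Fin n => 2) → ℂ := fun f =>
  if f = (fun _ => 1) then 1 else 0


section Helpers

variable {m : Type*} [Fintype m]

lemma posSemidef_outer (v : m → ℂ) : (Matrix.vecMulVec v (star v)).PosSemidef := by
  have h : Matrix.vecMulVec v (star v) = Matrix.replicateCol Unit v * (Matrix.replicateCol Unit v)ᴴ := by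
    rw [Matrix.vecMulVec_eq Unit]
    congr 1
  rw [h]
  exact Matrix.posSemidef_self_mul_conjTranspose _

lemma posSemidef_rsmul {M : Matrix m m ℂ} (hM : M.PosSemidef) {c : ℝ} (hc : 0 ≤ c) :
    ((c : ℂ) • M).PosSemidef := by
  constructor
  · unfold Matrix.IsHermitian
    rw [Matrix.conjTranspose_smul, hM.1.eq]
    norm_num
  · intro x
    exact (hM.smul (a := (c : ℂ)) (by exact_mod_cast hc)).2 x

lemma trace_outer (v : m → ℂ) :
    (Matrix.vecMulVec v (star v)).trace = ∑ f, v f * star (v f) := by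
  simp [Matrix.trace, Matrix.diag, Matrix.vecMulVec_apply]

end Helpers

lemma marginal_add {d : ι → ℕ} (S : Finset ι)
    (A B : Matrix (Config d) (Config d) ℂ) :
    marginal S (A + B) = marginal S A + marginal S B := by
  funext f g
  simp [marginal, Finset.sum_add_distrib]

lemma marginal_smul {d : ι → ℕ} (S : Finset ι) (c : ℂ)
    (A : Matrix (Config d) (Config d) ℂ) :
    marginal S (c • A) = c • marginal S A := by
  funext f g
  simp [marginal, Finset.mul_sum]

lemma restrict_eq_iff {n : ℕ} (S : Finset (Fin n)) (f a : Config (fun _ : Fin n => 2)) :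
    f = a ↔ ((fun i : {i // i ∈ S} => f i) = fun i : {i // i ∈ S} => a i) ∧
      ((fun i : {i // i ∉ S} => f i) = fun i : {i // i ∉ S} => a i) := by
  constructor
  · rintro rfl; exact ⟨rfl, rfl⟩
  · rintro ⟨h1, h2⟩
    funext i
    by_cases h : i ∈ S
    · exact congrFun h1 ⟨i, h⟩
    · exact congrFun h2 ⟨i, h⟩

lemma marginal_cross_zero {n : ℕ} (S : Finset (Fin n)) (hS : S ≠ Finset.univ)
    (a b : Config (fun _ : Fin n => 2)) (hab : ∀ i, a i ≠ b i)
    (u v : Config (fun _ : Fin n => 2) → ℂ)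
    (hu : ∀ x, x ≠ a → u x = 0) (hv : ∀ x, x ≠ b → v x = 0) :
    marginal S (Matrix.vecMulVec u (star v)) = 0 := by
  obtain ⟨i, hi⟩ : ∃ i, i ∉ S := by
    by_contra hc
    push_neg at hc
    exact hS (Finset.eq_univ_iff_forall.mpr hc)
  funext f g
  show ∑ h : Config (fun i : {i // i ∉ S} => 2), _ = 0
  refine Finset.sum_eq_zero fun h _ => ?_
  simp only [Matrix.vecMulVec_apply, Pi.star_apply]
  by_cases h1 : merge S f h = a
  · by_cases h2 : merge S g h = b
    · exfalso
      have e1 : merge (d := fun _ : Fin n => 2) S f h i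
          = merge (d := fun _ : Fin n => 2) S g h i := by
        simp [merge, hi]
      rw [h1, h2] at e1
      exact hab i e1
    · rw [hv _ h2, star_zero, mul_zero]
  · rw [hu _ h1, zero_mul]

lemma sqrt_two_inv_sq : ((((Real.sqrt 2)⁻¹ : ℝ)) : ℂ) * star ((((Real.sqrt 2)⁻¹ : ℝ)) : ℂ) =
    (2 : ℂ)⁻¹ := by
  rw [Complex.star_def, Complex.conj_ofReal, ← Complex.ofReal_mul, ← mul_inv,
    Real.mul_self_sqrt (by norm_num)]
  norm_num

lemma sqrt_two_inv_sq' : ((Real.sqrt 2 : ℂ))⁻¹ * ((Real.sqrt 2 : ℂ))⁻¹ = (2 : ℂ)⁻¹ := by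
  rw [← mul_inv, ← Complex.ofReal_mul, Real.mul_self_sqrt (by norm_num)]
  norm_num

lemma ghz_decomp (n : ℕ) (hn : 0 < n) :
    Matrix.vecMulVec (ghzVec n) (star (ghzVec n)) =
      ((2 : ℂ))⁻¹ • (Matrix.vecMulVec (allZero n) (star (allZero n)) +
        Matrix.vecMulVec (allOne n) (star (allOne n)) +
        Matrix.vecMulVec (allZero n) (star (allOne n)) +
        Matrix.vecMulVec (allOne n) (star (allZero n))) := by
  have hne : (fun _ : Fin n => (0 : Fin 2)) ≠ (fun _ : Fin n => (1 : Fin 2)) := by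
    intro h
    exact absurd (congrFun h ⟨0, hn⟩) (by decide)
  have hne' := Ne.symm hne
  funext f g
  simp only [Matrix.vecMulVec_apply, Matrix.smul_apply, Matrix.add_apply, Pi.star_apply,
    ghzVec, allZero, allOne, smul_eq_mul]
  by_cases hf0 : f = fun _ => 0
  · subst hf0
    by_cases hg0 : g = fun _ => 0
    · subst hg0
      simp [hne, sqrt_two_inv_sq, sqrt_two_inv_sq']
    · by_cases hg1 : g = fun _ => 1
      · subst hg1
        simp [hne, hne', sqrt_two_inv_sq, sqrt_two_inv_sq']
      · simp [hne, hg0, hg1]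
  · by_cases hf1 : f = fun _ => 1
    · subst hf1
      by_cases hg0 : g = fun _ => 0
      · subst hg0
        simp [hne, hne', sqrt_two_inv_sq, sqrt_two_inv_sq']
      · by_cases hg1 : g = fun _ => 1
        · subst hg1
          simp [hne, hne', sqrt_two_inv_sq, sqrt_two_inv_sq']
        · simp [hne', hg0, hg1]
    · simp [hf0, hf1]

lemma sepAcross_outer {n : ℕ} (S : Finset (Fin n))
    (v : Config (fun _ : Fin n => 2) → ℂ)
    (vA : Config (fun i : {i // i ∈ S} => 2) → ℂ)
    (vB : Config (fun i : {i // i ∉ S} => 2) → ℂ)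
    (hfac : ∀ f : Config (fun _ : Fin n => 2),
      v f = vA (fun i => f i) * vB (fun i => f i)) :
    SepAcross S (Matrix.vecMulVec v (star v)) := by
  refine ⟨1, fun _ => 1, fun _ => Matrix.vecMulVec vA (star vA),
    fun _ => Matrix.vecMulVec vB (star vB), fun _ => zero_le_one,
    fun _ => ⟨posSemidef_outer _, posSemidef_outer _⟩, ?_⟩
  rw [Fin.sum_univ_one]
  funext f g
  simp only [Matrix.smul_apply, Matrix.vecMulVec_apply, Pi.star_apply, prodAcross,
    Complex.ofReal_one, one_smul, hfac, star_mul']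
  ring


/-- for `ρ = p|ψ_n⟩⟨ψ_n| + (1−p)|GHZ_n⟩⟨GHZ_n|` with `0 < p < 1`, the
biseparable state `σ = p|ψ_n⟩⟨ψ_n| + ((1−p)/2)|0⋯0⟩⟨0⋯0| + ((1−p)/2)|1⋯1⟩⟨1⋯1|` has the
same marginals as `ρ` on every subset of size `n−1`; hence `C(ρ, S_{n−1})` contains a
biseparable state. -/
theorem biseparable_state_in_compatibility_set
    (n : ℕ) (hn : 3 ≤ n) (p : ℝ) (hp0 : 0 < p) (hp1 : p < 1)
    (ρ σ : Matrix (Config (fun _ : Fin n => 2)) (Config (fun _ : Fin n => 2)) ℂ)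
    (hρ : ρ = (p : ℂ) • Matrix.vecMulVec (psiVec n) (star (psiVec n)) +
      ((1 - p : ℝ) : ℂ) • Matrix.vecMulVec (ghzVec n) (star (ghzVec n)))
    (hσ : σ = (p : ℂ) • Matrix.vecMulVec (psiVec n) (star (psiVec n)) +
      (((1 - p) / 2 : ℝ) : ℂ) • Matrix.vecMulVec (allZero n) (star (allZero n)) +
      (((1 - p) / 2 : ℝ) : ℂ) • Matrix.vecMulVec (allOne n) (star (allOne n))) :
    IsState σ ∧ Bisep σ ∧
    ∀ S : Finset (Fin n), S.card = n - 1 → marginal S σ = marginal S ρ := by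
  have hnpos : 0 < n := by omega
  set z : Config (fun _ : Fin n => 2) := fun _ => 0 with hz
  set o : Config (fun _ : Fin n => 2) := fun _ => 1 with ho
  set e0 : Config (fun _ : Fin n => 2) := fun i => if (i : ℕ) = 0 then 1 else 0 with he0
  set e1 : Config (fun _ : Fin n => 2) := fun i => if (i : ℕ) = 1 then 1 else 0 with he1
  have hzo : ∀ i, z i ≠ o i := fun i => by simp [hz, ho]
  have hoz : ∀ i, o i ≠ z i := fun i => by simp [hz, ho]
  have he01 : e0 ≠ e1 := by
    intro h
    have := congrFun h ⟨0, hnpos⟩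
    simp [he0, he1] at this
  have hp0' : (0:ℝ) ≤ p := le_of_lt hp0
  have hq0 : (0:ℝ) ≤ (1 - p) / 2 := by linarith
  refine ⟨⟨?_, ?_⟩, ?_, ?_⟩
  · -- PosSemidef
    rw [hσ]
    exact ((posSemidef_rsmul (posSemidef_outer _) hp0').add
      (posSemidef_rsmul (posSemidef_outer _) hq0)).add
      (posSemidef_rsmul (posSemidef_outer _) hq0)
  · -- trace = 1
    have tψ : (Matrix.vecMulVec (psiVec n) (star (psiVec n))).trace = 1 := by
      rw [trace_outer]
      have key : ∀ f : Config (fun _ : Fin n => 2), psiVec n f * star (psiVec n f) =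
          (if f = e0 then (2:ℂ)⁻¹ else 0) + (if f = e1 then (2:ℂ)⁻¹ else 0) := by
        intro f
        simp only [psiVec, ← he0, ← he1]
        by_cases h0 : f = e0
        · have h1 : f ≠ e1 := by rw [h0]; exact he01
          rw [if_pos (Or.inl h0), if_pos h0, if_neg h1, sqrt_two_inv_sq, add_zero]
        · by_cases h1 : f = e1
          · rw [if_pos (Or.inr h1), if_neg h0, if_pos h1, sqrt_two_inv_sq, zero_add]
          · rw [if_neg (by tauto), if_neg h0, if_neg h1, star_zero, mul_zero, add_zero]
      rw [Finset.sum_congr rfl fun f _ => key f, Finset.sum_add_distrib]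
      simp
      norm_num
    have tz : (Matrix.vecMulVec (allZero n) (star (allZero n))).trace = 1 := by
      rw [trace_outer]
      have key : ∀ f : Config (fun _ : Fin n => 2), allZero n f * star (allZero n f) =
          (if f = z then (1:ℂ) else 0) := by
        intro f
        simp only [allZero, ← hz]
        by_cases h0 : f = z <;> simp [h0]
      rw [Finset.sum_congr rfl fun f _ => key f]
      simp
    have tone : (Matrix.vecMulVec (allOne n) (star (allOne n))).trace = 1 := by
      rw [trace_outer]
      have key : ∀ f : Config (fun _ : Fin n => 2), allOne n f * star (allOne n f) =
          (if f = o then (1:ℂ) else 0) := by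
        intro f
        simp only [allOne, ← ho]
        by_cases h0 : f = o <;> simp [h0]
      rw [Finset.sum_congr rfl fun f _ => key f]
      simp
    rw [hσ, Matrix.trace_add, Matrix.trace_add, Matrix.trace_smul, Matrix.trace_smul,
      Matrix.trace_smul, tψ, tz, tone]
    simp only [smul_eq_mul]
    push_cast
    ring
  · -- Bisep
    set T : Finset (Fin n) := Finset.univ.filter (fun i : Fin n => (i : ℕ) < 2) with hT
    have hmemT : ∀ i : Fin n, i ∈ T ↔ (i : ℕ) < 2 := by
      intro i; simp [hT]
    have hTne : T ≠ ∅ := by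
      intro h
      have : (⟨0, hnpos⟩ : Fin n) ∈ T := (hmemT _).mpr (by norm_num)
      simp [h] at this
    have hTnu : T ≠ Finset.univ := by
      intro h
      have : (⟨2, by omega⟩ : Fin n) ∈ T := h ▸ Finset.mem_univ _
      rw [hmemT] at this
      exact (by omega : ¬ (2:ℕ) < 2) this
    have facψ : SepAcross T (Matrix.vecMulVec (psiVec n) (star (psiVec n))) := by
      refine sepAcross_outer T (psiVec n)
        (fun g => if g = (fun i : {i // i ∈ T} => e0 i) ∨ g = (fun i : {i // i ∈ T} => e1 i)
          then ((Real.sqrt 2)⁻¹ : ℝ) else 0)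
        (fun g => if g = (fun _ : {i // i ∉ T} => (0 : Fin 2)) then 1 else 0) ?_
      intro f
      have hrest0 : (fun i : {i // i ∉ T} => e0 i) = (fun _ : {i // i ∉ T} => (0 : Fin 2)) := by
        funext i
        have hlt : ¬ ((i : Fin n) : ℕ) < 2 := fun h => i.2 ((hmemT _).mpr h)
        simp only [he0]
        rw [if_neg (by omega)]
      have hrest1 : (fun i : {i // i ∉ T} => e1 i) = (fun _ : {i // i ∉ T} => (0 : Fin 2)) := by
        funext i
        have hlt : ¬ ((i : Fin n) : ℕ) < 2 := fun h => i.2 ((hmemT _).mpr h)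
        simp only [he1]
        rw [if_neg (by omega)]
      have key : (f = e0 ∨ f = e1) ↔
          (((fun i : {i // i ∈ T} => f i) = (fun i : {i // i ∈ T} => e0 i) ∨
            (fun i : {i // i ∈ T} => f i) = (fun i : {i // i ∈ T} => e1 i)) ∧
           (fun i : {i // i ∉ T} => f i) = (fun _ : {i // i ∉ T} => (0 : Fin 2))) := by
        constructor
        · rintro (rfl | rfl)
          · exact ⟨Or.inl rfl, hrest0⟩
          · exact ⟨Or.inr rfl, hrest1⟩
        · rintro ⟨(h | h), hB⟩
          · exact Or.inl ((restrict_eq_iff T f e0).mpr ⟨h, hB.trans hrest0.symm⟩)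
          · exact Or.inr ((restrict_eq_iff T f e1).mpr ⟨h, hB.trans hrest1.symm⟩)
      simp only [psiVec, ← he0, ← he1]
      by_cases hc : f = e0 ∨ f = e1
      · rw [if_pos hc, if_pos (key.mp hc).1, if_pos (key.mp hc).2, mul_one]
      · rw [if_neg hc]
        by_cases hA : ((fun i : {i // i ∈ T} => f i) = (fun i : {i // i ∈ T} => e0 i) ∨
            (fun i : {i // i ∈ T} => f i) = (fun i : {i // i ∈ T} => e1 i))
        · by_cases hB : (fun i : {i // i ∉ T} => f i) = (fun _ : {i // i ∉ T} => (0 : Fin 2))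
          · exact absurd (key.mpr ⟨hA, hB⟩) hc
          · rw [if_neg hB, mul_zero]
        · rw [if_neg hA, zero_mul]
    have facz : SepAcross T (Matrix.vecMulVec (allZero n) (star (allZero n))) := by
      refine sepAcross_outer T (allZero n)
        (fun g => if g = (fun _ : {i // i ∈ T} => (0 : Fin 2)) then 1 else 0)
        (fun g => if g = (fun _ : {i // i ∉ T} => (0 : Fin 2)) then 1 else 0) ?_
      intro f
      have key := restrict_eq_iff T f z
      simp only [allZero, ← hz]
      by_cases hc : f = z
      · rw [if_pos hc, if_pos (key.mp hc).1, if_pos (key.mp hc).2, mul_one]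
      · rw [if_neg hc]
        by_cases hA : (fun i : {i // i ∈ T} => f i) = (fun _ : {i // i ∈ T} => (0 : Fin 2))
        · by_cases hB : (fun i : {i // i ∉ T} => f i) = (fun _ : {i // i ∉ T} => (0 : Fin 2))
          · exact absurd (key.mpr ⟨hA, hB⟩) hc
          · rw [if_neg hB, mul_zero]
        · rw [if_neg hA, zero_mul]
    have faco : SepAcross T (Matrix.vecMulVec (allOne n) (star (allOne n))) := by
      refine sepAcross_outer T (allOne n)
        (fun g => if g = (fun _ : {i // i ∈ T} => (1 : Fin 2)) then 1 else 0)
        (fun g => if g = (fun _ : {i // i ∉ T} => (1 : Fin 2)) then 1 else 0) ?_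
      intro f
      have key := restrict_eq_iff T f o
      simp only [allOne, ← ho]
      by_cases hc : f = o
      · rw [if_pos hc, if_pos (key.mp hc).1, if_pos (key.mp hc).2, mul_one]
      · rw [if_neg hc]
        by_cases hA : (fun i : {i // i ∈ T} => f i) = (fun _ : {i // i ∈ T} => (1 : Fin 2))
        · by_cases hB : (fun i : {i // i ∉ T} => f i) = (fun _ : {i // i ∉ T} => (1 : Fin 2))
          · exact absurd (key.mpr ⟨hA, hB⟩) hc
          · rw [if_neg hB, mul_zero]
        · rw [if_neg hA, zero_mul]
    refine ⟨3, ![p, (1-p)/2, (1-p)/2], ![T, T, T],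
      ![Matrix.vecMulVec (psiVec n) (star (psiVec n)),
        Matrix.vecMulVec (allZero n) (star (allZero n)),
        Matrix.vecMulVec (allOne n) (star (allOne n))], ?_, ?_, ?_, ?_⟩
    · intro j
      fin_cases j <;> simp [hp0', hq0]
    · intro j
      fin_cases j <;> exact ⟨hTne, hTnu⟩
    · intro j
      fin_cases j <;> [exact facψ; exact facz; exact faco]
    · rw [hσ, Fin.sum_univ_three]
      simp
  · -- marginals agree
    intro S hS
    have hSnu : S ≠ Finset.univ := by
      intro h
      rw [h, Finset.card_univ, Fintype.card_fin] at hS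
      omega
    have m01 : marginal S (Matrix.vecMulVec (allZero n) (star (allOne n))) = 0 :=
      marginal_cross_zero S hSnu z o hzo (allZero n) (allOne n)
        (fun x hx => by simp [allZero, ← hz, hx]) (fun x hx => by simp [allOne, ← ho, hx])
    have m10 : marginal S (Matrix.vecMulVec (allOne n) (star (allZero n))) = 0 :=
      marginal_cross_zero S hSnu o z hoz (allOne n) (allZero n)
        (fun x hx => by simp [allOne, ← ho, hx]) (fun x hx => by simp [allZero, ← hz, hx])
    rw [hρ, hσ, ghz_decomp n hnpos]
    simp only [marginal_add, marginal_smul, m01, m10, add_zero, smul_add, smul_zero]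
    push_cast
    module

end QDL

end
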